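/- Let P be an n×n orthogonal projection written in 2×2 block form P = [[A, B],[B*, C]] and let S = [[I, 0],[0, -I]] be the corresponding diagonal symmetry. Then ‖P S P‖ ≥ max{|1 - 2λ| : λ a nonzero eigenvalue of A or of C}. -/

import Mathlib

open Matrix

set_option synthInstance.maxHeartbeats 1000000 in
lemma eig_norm_le {n : Type*} [Fintype n] [DecidableEq n]
    (M : Matrix n n ℂ) (v : n → ℂ) (c : ℂ) (hv : v ≠ 0) (h : M *ᵥ v = c • v) :
    ‖c‖ ≤ ‖Matrix.toEuclideanCLM (𝕜 := ℂ) M‖ := by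
  set w : EuclideanSpace ℂ n := (WithLp.equiv 2 _).symm v with hw
  have hw0 : w ≠ 0 := by
    simpa [hw] using hv
  have hTw : Matrix.toEuclideanCLM (𝕜 := ℂ) M w = c • w := by
    rw [hw, WithLp.equiv_symm_apply, Matrix.toEuclideanCLM_toLp, h]
    rfl
  have h1 : ‖Matrix.toEuclideanCLM (𝕜 := ℂ) M w‖ ≤ ‖Matrix.toEuclideanCLM (𝕜 := ℂ) M‖ * ‖w‖ :=
    (Matrix.toEuclideanCLM (𝕜 := ℂ) M).le_opNorm w
  rw [hTw, norm_smul] at h1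
  have hwpos : 0 < ‖w‖ := norm_pos_iff.mpr hw0
  have := le_of_mul_le_mul_right h1 hwpos
  simpa using this

lemma spectrum_exists_eigenvector {n : Type*} [Fintype n] [DecidableEq n]
    {A : Matrix n n ℂ} {μ : ℂ} (h : μ ∈ spectrum ℂ A) :
    ∃ x : n → ℂ, x ≠ 0 ∧ A *ᵥ x = μ • x := by
  rw [← AlgEquiv.spectrum_eq (Matrix.toLinAlgEquiv' (R := ℂ) (n := n)),
    ← Module.End.hasEigenvalue_iff_mem_spectrum] at h
  obtain ⟨x, hx⟩ := h.exists_hasEigenvector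
  exact ⟨x, hx.right, by simpa [Matrix.toLinAlgEquiv'_apply] using hx.apply_eq_smul⟩

theorem PSP_norm_ge_spectrum_bound
    {m l : ℕ} (P : Matrix (Fin m ⊕ Fin l) (Fin m ⊕ Fin l) ℂ)
    (hP : P.IsHermitian) (hP2 : P * P = P)
    (S : Matrix (Fin m ⊕ Fin l) (Fin m ⊕ Fin l) ℂ)
    (hS : S = Matrix.fromBlocks 1 0 0 (-1)) :
    ∀ μ : ℂ, (μ ∈ spectrum ℂ P.toBlocks₁₁ ∨ μ ∈ spectrum ℂ P.toBlocks₂₂) → μ ≠ 0 →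
      ‖1 - 2 * μ‖ ≤ ‖Matrix.toEuclideanCLM (𝕜 := ℂ) (P * S * P)‖ := by
  intro μ hμ hμ0
  set A := P.toBlocks₁₁ with hA
  set B := P.toBlocks₁₂ with hB
  set C := P.toBlocks₂₁ with hC
  set D := P.toBlocks₂₂ with hD
  have hPb : P = Matrix.fromBlocks A B C D := (Matrix.fromBlocks_toBlocks P).symm
  have hsq : Matrix.fromBlocks (A*A + B*C) (A*B + B*D) (C*A + D*C) (C*B + D*D)
      = Matrix.fromBlocks A B C D := by
    rw [← Matrix.fromBlocks_multiply, ← hPb, hP2]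
  have h11 : A*A + B*C = A := congrArg Matrix.toBlocks₁₁ hsq
  have h12 : A*B + B*D = B := congrArg Matrix.toBlocks₁₂ hsq
  have h21 : C*A + D*C = C := congrArg Matrix.toBlocks₂₁ hsq
  have h22 : C*B + D*D = D := congrArg Matrix.toBlocks₂₂ hsq
  have hBC : B*C = A - A*A := eq_sub_of_add_eq' h11
  have hDC : D*C = C - C*A := eq_sub_of_add_eq' h21
  have hAB : A*B = B - B*D := eq_sub_of_add_eq h12
  have hCB : C*B = D - D*D := eq_sub_of_add_eq h22
  have hPS : P * S = Matrix.fromBlocks A (-B) C (-D) := by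
    rw [hPb, hS, Matrix.fromBlocks_multiply]
    simp
  have hM : P * S * P = Matrix.fromBlocks (A*A - B*C) (A*B - B*D) (C*A - D*C) (C*B - D*D) := by
    rw [hPS, hPb, Matrix.fromBlocks_multiply]
    simp [Matrix.neg_mul, sub_eq_add_neg]
  have hMP : P * S * P * P = P * S * P := by
    rw [Matrix.mul_assoc (P * S), hP2]
  rcases hμ with h | h
  · obtain ⟨x, hx0, hx⟩ := spectrum_exists_eigenvector h
    set v : Fin m ⊕ Fin l → ℂ := Sum.elim (μ • x) (C *ᵥ x) with hv
    have hPu : P *ᵥ Sum.elim x 0 = v := by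
      rw [hPb, Matrix.fromBlocks_mulVec, hv]
      simp [hx]
    have hv0 : v ≠ 0 := by
      intro hc
      apply hx0
      have h1 : μ • x = 0 := funext fun i => congrFun hc (Sum.inl i)
      simpa [hμ0] using h1
    have key : (P * S * P) *ᵥ v = (2*μ - 1) • v := by
      conv_lhs => rw [← hPu, Matrix.mulVec_mulVec, hMP, hM, Matrix.fromBlocks_mulVec]
      have e1 : (A*A - B*C) *ᵥ x = (2*μ - 1) • (μ • x) := by
        rw [Matrix.sub_mulVec, hBC, Matrix.sub_mulVec, ← Matrix.mulVec_mulVec, hx,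
          Matrix.mulVec_smul, hx]
        module
      have e2 : (C*A - D*C) *ᵥ x = (2*μ - 1) • (C *ᵥ x) := by
        rw [Matrix.sub_mulVec, hDC, Matrix.sub_mulVec, ← Matrix.mulVec_mulVec, hx,
          Matrix.mulVec_smul]
        module
      funext i
      cases i with
      | inl i => simpa [hv] using congrFun e1 i
      | inr i => simpa [hv] using congrFun e2 i
    have := eig_norm_le (P * S * P) v (2*μ - 1) hv0 key
    calc ‖1 - 2*μ‖ = ‖2*μ - 1‖ := by
          rw [← norm_neg (1 - 2*μ)]; ring_nf
      _ ≤ _ := this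
  · obtain ⟨x, hx0, hx⟩ := spectrum_exists_eigenvector h
    set v : Fin m ⊕ Fin l → ℂ := Sum.elim (B *ᵥ x) (μ • x) with hv
    have hPu : P *ᵥ Sum.elim 0 x = v := by
      rw [hPb, Matrix.fromBlocks_mulVec, hv]
      simp [hx]
    have hv0 : v ≠ 0 := by
      intro hc
      apply hx0
      have h1 : μ • x = 0 := funext fun i => congrFun hc (Sum.inr i)
      simpa [hμ0] using h1
    have key : (P * S * P) *ᵥ v = (1 - 2*μ) • v := by
      conv_lhs => rw [← hPu, Matrix.mulVec_mulVec, hMP, hM, Matrix.fromBlocks_mulVec]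
      have e1 : (A*B - B*D) *ᵥ x = (1 - 2*μ) • (B *ᵥ x) := by
        rw [Matrix.sub_mulVec, hAB, Matrix.sub_mulVec, ← Matrix.mulVec_mulVec, hx,
          Matrix.mulVec_smul]
        module
      have e2 : (C*B - D*D) *ᵥ x = (1 - 2*μ) • (μ • x) := by
        rw [Matrix.sub_mulVec, hCB, Matrix.sub_mulVec, ← Matrix.mulVec_mulVec, hx,
          Matrix.mulVec_smul, hx]
        module
      funext i
      cases i with
      | inl i => simpa [hv] using congrFun e1 i
      | inr i => simpa [hv] using congrFun e2 i
    exact eig_norm_le (P * S * P) v (1 - 2*μ) hv0 key
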